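/- Let X be a Ptolemy metric space, b a Busemann function of a geodesic line, and x, x', y points with b(x) = b(x'), and let y'' be a point with d(x,y'') = d(x,y), d(x',y'') = d(x',y), and d(y,y'') = 2 d(x,y) (y'' is the reflection of y through the horosphere of x). Then d(x',y) ≥ d(x,x'). -/
import Mathlib

/-- in a Ptolemy metric space, if `b(x) = b(x')` for a Busemann function
`b` and `y''` is the reflection of `y` through the horosphere of `x` (so
`d(x,y'') = d(x,y)`, `d(x',y'') = d(x',y)`, `d(y,y'') = 2 d(x,y)`), then
`d(x',y) ≥ d(x,x')`. -/
theorem reflection_distance_lower_bound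
    {X : Type*} [MetricSpace X]
    (hpt : ∀ a b c d : X,
      dist a c * dist b d ≤ dist a b * dist c d + dist a d * dist b c)
    (b : X → ℝ) (x x' y y'' : X)
    (hb : b x = b x')
    (h1 : dist x y'' = dist x y)
    (h2 : dist x' y'' = dist x' y)
    (h3 : dist y y'' = 2 * dist x y) :
    dist x x' ≤ dist x' y := by
  rcases eq_or_lt_of_le (dist_nonneg : (0:ℝ) ≤ dist x y) with h0 | h0
  · have hxy : x = y := dist_eq_zero.mp h0.symm
    rw [hxy, dist_comm]
  · have key := hpt y x y'' x'
    rw [h3, dist_comm y x, dist_comm y'' x', h2, dist_comm y x', h1] at key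
    nlinarith [key]
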